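/- Let T : ℝᵈ → ℝᵈ be an affine map that sends some regular simplex of edge length 1 to an η-approximate regular simplex with maximum edge length λ > 0. Then there is a constant C depending only on d and an isometry R : ℝᵈ → ℝᵈ such that ‖T(x) - λR(x)‖ ≤ C·λ·η for all x in the unit ball B(0,1). -/

import Mathlib

open Finset RealInnerProductSpace

lemma stmt17_inner_sum_sum {d : ℕ} (v w : Fin d → EuclideanSpace ℝ (Fin d))
    (c e : Fin d → ℝ) :
    ⟪∑ i, c i • v i, ∑ j, e j • w j⟫ = ∑ i, ∑ j, c i * e j * ⟪v i, w j⟫ := by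
  rw [sum_inner]
  refine Finset.sum_congr rfl fun i _ => ?_
  rw [inner_sum]
  refine Finset.sum_congr rfl fun j _ => ?_
  rw [real_inner_smul_left, real_inner_smul_right]
  ring

set_option maxHeartbeats 1000000 in
lemma stmt17_close_isometry {d : ℕ}
    (L : EuclideanSpace ℝ (Fin d) →ₗ[ℝ] EuclideanSpace ℝ (Fin d)) (ε : ℝ)
    (hε0 : 0 ≤ ε) (hε1 : ε ≤ 1/2)
    (h : ∀ x, |‖L x‖^2 - ‖x‖^2| ≤ ε * ‖x‖^2) :
    ∃ U : EuclideanSpace ℝ (Fin d) →ₗᵢ[ℝ] EuclideanSpace ℝ (Fin d),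
      ∀ x, ‖L x - U x‖ ≤ ε * ‖x‖ := by
  classical
  set A : EuclideanSpace ℝ (Fin d) →ₗ[ℝ] EuclideanSpace ℝ (Fin d) :=
    LinearMap.adjoint L * L with hAdef
  have hA : LinearMap.IsSymmetric A := LinearMap.isSymmetric_adjoint_mul_self L
  have hn : Module.finrank ℝ (EuclideanSpace ℝ (Fin d)) = d := finrank_euclideanSpace_fin
  set b := hA.eigenvectorBasis hn with hbdef
  set μ := hA.eigenvalues hn with hμdef
  have hAb : ∀ i, A (b i) = μ i • b i := fun i => by
    have := hA.apply_eigenvectorBasis hn i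
    exact_mod_cast this
  have hLL : ∀ x y, ⟪L x, L y⟫ = ⟪A x, y⟫ := by
    intro x y
    simp [hAdef, Module.End.mul_apply, LinearMap.adjoint_inner_left]
  have hbi : ∀ i j, ⟪b i, b j⟫ = if i = j then (1:ℝ) else 0 :=
    fun i j => orthonormal_iff_ite.mp b.orthonormal i j
  have hLb : ∀ i j, ⟪L (b i), L (b j)⟫ = if i = j then μ i else 0 := by
    intro i j
    rw [hLL, hAb i, real_inner_smul_left, hbi]
    by_cases hij : i = j <;> simp [hij]
  have hbnorm : ∀ i, ‖b i‖ = 1 := fun i => b.orthonormal.1 i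
  have hμbd : ∀ i, |μ i - 1| ≤ ε := by
    intro i
    have h1 := h (b i)
    have h2 : ‖L (b i)‖^2 = μ i := by
      rw [← real_inner_self_eq_norm_sq, hLb]; simp
    rw [h2, hbnorm] at h1
    simpa using h1
  have hμpos : ∀ i, (1:ℝ)/2 ≤ μ i := by
    intro i
    have := hμbd i
    rw [abs_le] at this
    linarith
  set s : Fin d → ℝ := fun i => Real.sqrt (μ i) with hsdef
  have hs0 : ∀ i, 0 < s i := fun i => Real.sqrt_pos.mpr (by linarith [hμpos i])
  have hs2 : ∀ i, s i * s i = μ i := fun i =>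
    Real.mul_self_sqrt (by linarith [hμpos i])
  set f : Fin d → EuclideanSpace ℝ (Fin d) := fun i => (s i)⁻¹ • L (b i) with hfdef
  have hLbf : ∀ i, L (b i) = s i • f i := by
    intro i
    rw [hfdef]
    simp [smul_smul, mul_inv_cancel₀ (hs0 i).ne']
  have hf : ∀ i j, ⟪f i, f j⟫ = if i = j then (1:ℝ) else 0 := by
    intro i j
    rw [hfdef]
    simp only [real_inner_smul_left, real_inner_smul_right, hLb]
    by_cases hij : i = j
    · subst hij
      simp only [if_pos rfl]
      rw [← hs2 i]
      field_simp
      exact div_self (by simpa using (hs0 i).ne')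
    · simp [hij]
  -- key norm computation for sums of f's
  have hsumf : ∀ c : Fin d → ℝ, ‖∑ i, c i • f i‖^2 = ∑ i, (c i)^2 := by
    intro c
    rw [← real_inner_self_eq_norm_sq, stmt17_inner_sum_sum]
    refine Finset.sum_congr rfl fun i _ => ?_
    rw [Finset.sum_eq_single i]
    · rw [hf]; simp; ring
    · intro j _ hji; rw [hf]; simp [Ne.symm hji]
    · simp
  have hsumb : ∀ c : Fin d → ℝ, ‖∑ i, c i • b i‖^2 = ∑ i, (c i)^2 := by
    intro c
    rw [← real_inner_self_eq_norm_sq, stmt17_inner_sum_sum]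
    refine Finset.sum_congr rfl fun i _ => ?_
    rw [Finset.sum_eq_single i]
    · rw [hbi]; simp; ring
    · intro j _ hji; rw [hbi]; simp [Ne.symm hji]
    · simp
  set Ul : EuclideanSpace ℝ (Fin d) →ₗ[ℝ] EuclideanSpace ℝ (Fin d) :=
    b.toBasis.constr ℝ f with hUldef
  have hUlb : ∀ i, Ul (b i) = f i := by
    intro i
    have := b.toBasis.constr_basis ℝ f i
    simpa [hUldef] using this
  have hrepr : ∀ x : EuclideanSpace ℝ (Fin d), ∑ i, b.toBasis.repr x i • b i = x := by
    intro x
    have := b.toBasis.sum_repr x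
    simpa using this
  have hUlx : ∀ x, Ul x = ∑ i, b.toBasis.repr x i • f i := by
    intro x
    conv_lhs => rw [← hrepr x]
    rw [map_sum]
    exact Finset.sum_congr rfl fun i _ => by rw [map_smul, hUlb]
  have hLx : ∀ x, L x = ∑ i, b.toBasis.repr x i • (s i • f i) := by
    intro x
    conv_lhs => rw [← hrepr x]
    rw [map_sum]
    exact Finset.sum_congr rfl fun i _ => by rw [map_smul, hLbf]
  have hxnorm : ∀ x : EuclideanSpace ℝ (Fin d), ‖x‖^2 = ∑ i, (b.toBasis.repr x i)^2 := by
    intro x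
    conv_lhs => rw [← hrepr x]
    exact hsumb _
  have hUnorm : ∀ x, ‖Ul x‖ = ‖x‖ := by
    intro x
    have h1 : ‖Ul x‖^2 = ‖x‖^2 := by rw [hUlx, hsumf, hxnorm]
    nlinarith [norm_nonneg (Ul x), norm_nonneg x]
  refine ⟨⟨Ul, hUnorm⟩, fun x => ?_⟩
  have hdiff : L x - Ul x = ∑ i, (b.toBasis.repr x i * (s i - 1)) • f i := by
    rw [hLx, hUlx, ← Finset.sum_sub_distrib]
    refine Finset.sum_congr rfl fun i _ => ?_
    rw [smul_smul, ← sub_smul]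
    congr 1
    ring
  have hsε : ∀ i, |s i - 1| ≤ ε := by
    intro i
    have h1 : (s i - 1) * (s i + 1) = μ i - 1 := by
      have := hs2 i; nlinarith
    have h2 : |s i - 1| * (s i + 1) = |μ i - 1| := by
      rw [← h1, abs_mul, abs_of_pos (by linarith [hs0 i] : (0:ℝ) < s i + 1)]
    nlinarith [abs_nonneg (s i - 1), hμbd i, hs0 i]
  have hLUx : ‖L x - Ul x‖^2 ≤ (ε * ‖x‖)^2 := by
    show ‖L x - Ul x‖^2 ≤ (ε * ‖x‖)^2
    have h1 : ‖L x - Ul x‖^2 = ∑ i, (b.toBasis.repr x i * (s i - 1))^2 := by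
      rw [hdiff, hsumf]
    rw [h1, mul_pow, hxnorm x, Finset.mul_sum]
    refine Finset.sum_le_sum fun i _ => ?_
    have h2 := hsε i
    have h3 : (s i - 1)^2 ≤ ε^2 := by nlinarith [abs_nonneg (s i - 1), sq_abs (s i - 1)]
    nlinarith [sq_nonneg (b.toBasis.repr x i)]
  have hεx : 0 ≤ ε * ‖x‖ := mul_nonneg hε0 (norm_nonneg x)
  show ‖L x - Ul x‖ ≤ ε * ‖x‖
  nlinarith [norm_nonneg (L x - Ul x)]

lemma stmt17_gram_sum {d : ℕ} (c : Fin d → ℝ) :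
    ∑ i, ∑ j, c i * c j * (if i = j then (1:ℝ) else 1/2)
      = (∑ i, (c i)^2)/2 + (∑ i, c i)^2/2 := by
  have h1 : ∀ i : Fin d, ∑ j, c i * c j * (if i = j then (1:ℝ) else 1/2)
      = (∑ j, c i * c j / 2) + c i * c i / 2 := by
    intro i
    have : ∀ j : Fin d, c i * c j * (if i = j then (1:ℝ) else 1/2)
        = c i * c j / 2 + (if i = j then c i * c j / 2 else 0) := by
      intro j
      by_cases h : i = j <;> simp [h] <;> ring
    simp_rw [this, Finset.sum_add_distrib, Finset.sum_ite_eq]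
    simp
  simp_rw [h1, Finset.sum_add_distrib]
  have h2 : ∑ i : Fin d, ∑ j, c i * c j / 2 = (∑ i, c i)^2/2 := by
    simp_rw [← Finset.sum_div, ← Finset.mul_sum, ← Finset.sum_mul, sq]
  have h3 : ∑ i : Fin d, c i * c i / 2 = (∑ i, (c i)^2)/2 := by
    simp_rw [← Finset.sum_div, sq]
  rw [h2, h3]
  ring

set_option maxHeartbeats 2000000 in
/-- An affine map sending a unit regular simplex to an `η`-approximate regular
simplex with maximum edge length `λ` is within `C λ η` of `λ` times an isometry
on the unit ball. -/
theorem stmt17 (d : ℕ) :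
    ∃ C : ℝ, 0 < C ∧
      ∀ (T : EuclideanSpace ℝ (Fin d) →ᵃ[ℝ] EuclideanSpace ℝ (Fin d))
        (w : Fin (d + 1) → EuclideanSpace ℝ (Fin d)) (η lam : ℝ),
        0 ≤ η → η < 1 → 0 < lam →
        (∀ i j, i ≠ j → dist (w i) (w j) = 1) →
        (∀ i j, dist (T (w i)) (T (w j)) ≤ lam) →
        (∃ i j, i ≠ j ∧ dist (T (w i)) (T (w j)) = lam) →
        (∀ i j, i ≠ j → (1 - η) * lam ≤ dist (T (w i)) (T (w j))) →
        ∃ R : EuclideanSpace ℝ (Fin d) →ᵃⁱ[ℝ] EuclideanSpace ℝ (Fin d),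
          ∀ x ∈ Metric.ball (0 : EuclideanSpace ℝ (Fin d)) 1,
            ‖T x - lam • R x‖ ≤ C * lam * η := by
  classical
  by_cases hd0 : d = 0
  · subst hd0
    refine ⟨1, one_pos, fun T w η lam hη0 hη1 hlam _ _ _ _ => ?_⟩
    refine ⟨(LinearIsometry.id : EuclideanSpace ℝ (Fin 0) →ₗᵢ[ℝ] _).toAffineIsometry,
      fun x _ => ?_⟩
    have hz : T x - lam • (LinearIsometry.id : EuclideanSpace ℝ (Fin 0) →ₗᵢ[ℝ] _).toAffineIsometry x = 0 := by
      ext i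
      exact i.elim0
    rw [hz, norm_zero]
    positivity
  haveI : Nonempty (Fin d) := ⟨⟨0, Nat.pos_of_ne_zero hd0⟩⟩
  refine ⟨100*((d:ℝ)+1)^2, by positivity, fun T w η lam hη0 hη1 hlam hw hub _ hlb => ?_⟩
  set e : Fin d → EuclideanSpace ℝ (Fin d) := fun i => w i.succ - w 0 with hedef
  set L : EuclideanSpace ℝ (Fin d) →ₗ[ℝ] EuclideanSpace ℝ (Fin d) := lam⁻¹ • T.linear with hLdef
  -- Gram matrix of e
  have he_norm : ∀ i, ‖e i‖ = 1 := by
    intro i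
    have := hw i.succ 0 (Fin.succ_ne_zero i)
    simpa [hedef, dist_eq_norm] using this
  have he_sub : ∀ i j : Fin d, i ≠ j → ‖e i - e j‖ = 1 := by
    intro i j hij
    have h1 := hw i.succ j.succ (fun h => hij (Fin.succ_injective _ h))
    have h2 : e i - e j = w i.succ - w j.succ := by
      simp only [hedef]
      abel
    rw [h2]
    simpa [dist_eq_norm] using h1
  have hgram : ∀ i j, ⟪e i, e j⟫ = if i = j then (1:ℝ) else 1/2 := by
    intro i j
    by_cases h : i = j
    · subst h
      rw [if_pos rfl, real_inner_self_eq_norm_sq, he_norm]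
      norm_num
    · have h2 := norm_sub_sq_real (e i) (e j)
      rw [he_sub i j h, he_norm, he_norm] at h2
      simp only [if_neg h]
      nlinarith
  -- the images of edge vectors under L
  have hlin : ∀ a b : Fin (d+1), T.linear (w a - w b) = T (w a) - T (w b) := by
    intro a b
    exact T.linearMap_vsub (w a) (w b)
  have hLnorm : ∀ i, 1 - η ≤ ‖L (e i)‖ ∧ ‖L (e i)‖ ≤ 1 := by
    intro i
    have h1 : L (e i) = lam⁻¹ • (T (w i.succ) - T (w 0)) := by
      rw [hLdef]
      simp [hlin i.succ 0, hedef]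
    have h2 : ‖L (e i)‖ = lam⁻¹ * dist (T (w i.succ)) (T (w 0)) := by
      rw [h1, norm_smul, Real.norm_eq_abs, abs_of_pos (inv_pos.mpr hlam), dist_eq_norm]
    constructor
    · have := hlb i.succ 0 (Fin.succ_ne_zero i)
      rw [h2]
      have h3 : lam⁻¹ * ((1-η)*lam) ≤ lam⁻¹ * dist (T (w i.succ)) (T (w 0)) :=
        mul_le_mul_of_nonneg_left this (by positivity)
      calc (1:ℝ) - η = lam⁻¹ * ((1-η)*lam) := by field_simp
      _ ≤ _ := h3
    · have := hub i.succ 0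
      rw [h2]
      calc lam⁻¹ * dist (T (w i.succ)) (T (w 0)) ≤ lam⁻¹ * lam :=
        mul_le_mul_of_nonneg_left this (by positivity)
      _ = 1 := by field_simp
  have hLsub : ∀ i j : Fin d, i ≠ j → 1 - η ≤ ‖L (e i) - L (e j)‖ ∧ ‖L (e i) - L (e j)‖ ≤ 1 := by
    intro i j hij
    have h1 : L (e i) - L (e j) = lam⁻¹ • (T (w i.succ) - T (w j.succ)) := by
      rw [hLdef]
      simp only [LinearMap.smul_apply, ← smul_sub]
      congr 1
      rw [← map_sub, ← hlin i.succ j.succ]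
      congr 1
      simp only [hedef]
      abel
    have h2 : ‖L (e i) - L (e j)‖ = lam⁻¹ * dist (T (w i.succ)) (T (w j.succ)) := by
      rw [h1, norm_smul, Real.norm_eq_abs, abs_of_pos (inv_pos.mpr hlam), dist_eq_norm]
    have hne : i.succ ≠ j.succ := fun h => hij (Fin.succ_injective _ h)
    constructor
    · have := hlb i.succ j.succ hne
      rw [h2]
      have h3 : lam⁻¹ * ((1-η)*lam) ≤ lam⁻¹ * dist (T (w i.succ)) (T (w j.succ)) :=
        mul_le_mul_of_nonneg_left this (by positivity)
      calc (1:ℝ) - η = lam⁻¹ * ((1-η)*lam) := by field_simp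
      _ ≤ _ := h3
    · have := hub i.succ j.succ
      rw [h2]
      calc lam⁻¹ * dist (T (w i.succ)) (T (w j.succ)) ≤ lam⁻¹ * lam :=
        mul_le_mul_of_nonneg_left this (by positivity)
      _ = 1 := by field_simp
  have hB : ∀ i j, |⟪L (e i), L (e j)⟫ - ⟪e i, e j⟫| ≤ 3*η := by
    intro i j
    by_cases h : i = j
    · subst h
      rw [real_inner_self_eq_norm_sq, hgram, if_pos rfl]
      obtain ⟨ha, hb⟩ := hLnorm i
      have h0 : (0:ℝ) ≤ ‖L (e i)‖ := norm_nonneg _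
      rw [abs_le]
      constructor <;> nlinarith
    · have h2 := norm_sub_sq_real (L (e i)) (L (e j))
      obtain ⟨ha, hb⟩ := hLnorm i
      obtain ⟨hc, hd⟩ := hLnorm j
      obtain ⟨he', hf'⟩ := hLsub i j h
      rw [hgram, if_neg h]
      have h0i : (0:ℝ) ≤ ‖L (e i)‖ := norm_nonneg _
      have h0j : (0:ℝ) ≤ ‖L (e j)‖ := norm_nonneg _
      have h0ij : (0:ℝ) ≤ ‖L (e i) - L (e j)‖ := norm_nonneg _
      rw [abs_le]
      constructor <;> nlinarith
  -- basis from linear independence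
  have hnormsum : ∀ c : Fin d → ℝ,
      ‖∑ i, c i • e i‖^2 = (∑ i, (c i)^2)/2 + (∑ i, c i)^2/2 := by
    intro c
    rw [← real_inner_self_eq_norm_sq, stmt17_inner_sum_sum]
    rw [← stmt17_gram_sum c]
    exact Finset.sum_congr rfl fun i _ => Finset.sum_congr rfl fun j _ => by rw [hgram]
  have hind : LinearIndependent ℝ e := by
    rw [Fintype.linearIndependent_iff]
    intro c hc i
    have h1 := hnormsum c
    rw [hc, norm_zero] at h1
    norm_num at h1
    have h2 : ∑ i, (c i)^2 = 0 := by
      nlinarith [sq_nonneg (∑ i, c i), Finset.sum_nonneg (fun j (_ : j ∈ Finset.univ) => sq_nonneg (c j))]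
    have h3 := (Finset.sum_eq_zero_iff_of_nonneg (fun j _ => sq_nonneg (c j))).mp h2 i (Finset.mem_univ i)
    exact pow_eq_zero_iff two_ne_zero |>.mp h3
  set bb : Module.Basis (Fin d) ℝ (EuclideanSpace ℝ (Fin d)) :=
    basisOfLinearIndependentOfCardEqFinrank hind (by simp) with hbbdef
  have hbbe : ∀ i, bb i = e i := fun i => by
    rw [hbbdef, coe_basisOfLinearIndependentOfCardEqFinrank]
  have hbb : ∀ x : EuclideanSpace ℝ (Fin d), ∑ i, bb.repr x i • e i = x := by
    intro x
    have h1 := bb.sum_repr x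
    calc ∑ i, bb.repr x i • e i = ∑ i, bb.repr x i • bb i :=
      Finset.sum_congr rfl fun i _ => by rw [hbbe]
    _ = x := h1
  -- the quadratic form bound
  have hquad : ∀ x : EuclideanSpace ℝ (Fin d),
      |‖L x‖^2 - ‖x‖^2| ≤ 6*(d:ℝ)*η*‖x‖^2 := by
    intro x
    set c : Fin d → ℝ := fun i => bb.repr x i with hcdef
    have hxc : ∑ i, c i • e i = x := hbb x
    have hnx : ‖x‖^2 = (∑ i, (c i)^2)/2 + (∑ i, c i)^2/2 := by
      rw [← hxc]; exact hnormsum c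
    have hSle : ∑ i, (c i)^2 ≤ 2*‖x‖^2 := by nlinarith [sq_nonneg (∑ i, c i)]
    have hLxc : L x = ∑ i, c i • L (e i) := by
      rw [← hxc, map_sum]
      exact Finset.sum_congr rfl fun i _ => by rw [map_smul]
    have hLx2 : ‖L x‖^2 = ∑ i, ∑ j, c i * c j * ⟪L (e i), L (e j)⟫ := by
      rw [hLxc, ← real_inner_self_eq_norm_sq, stmt17_inner_sum_sum]
    have hx2 : ‖x‖^2 = ∑ i, ∑ j, c i * c j * ⟪e i, e j⟫ := by
      conv_lhs => rw [← hxc]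
      rw [← real_inner_self_eq_norm_sq, stmt17_inner_sum_sum]
    have hdiff : ‖L x‖^2 - ‖x‖^2
        = ∑ i, ∑ j, c i * c j * (⟪L (e i), L (e j)⟫ - ⟪e i, e j⟫) := by
      rw [hLx2, hx2, ← Finset.sum_sub_distrib]
      refine Finset.sum_congr rfl fun i _ => ?_
      rw [← Finset.sum_sub_distrib]
      exact Finset.sum_congr rfl fun j _ => by ring
    have habs : |‖L x‖^2 - ‖x‖^2| ≤ ∑ i, ∑ j, |c i| * |c j| * (3*η) := by
      rw [hdiff]
      calc |∑ i, ∑ j, c i * c j * (⟪L (e i), L (e j)⟫ - ⟪e i, e j⟫)|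
          ≤ ∑ i, |∑ j, c i * c j * (⟪L (e i), L (e j)⟫ - ⟪e i, e j⟫)| :=
            Finset.abs_sum_le_sum_abs _ _
        _ ≤ ∑ i, ∑ j, |c i * c j * (⟪L (e i), L (e j)⟫ - ⟪e i, e j⟫)| :=
            Finset.sum_le_sum fun i _ => Finset.abs_sum_le_sum_abs _ _
        _ ≤ ∑ i, ∑ j, |c i| * |c j| * (3*η) := by
            refine Finset.sum_le_sum fun i _ => Finset.sum_le_sum fun j _ => ?_
            rw [abs_mul, abs_mul]
            exact mul_le_mul_of_nonneg_left (hB i j) (by positivity)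
    have hsum2 : ∑ i, ∑ j, |c i| * |c j| * (3*η) = (∑ i, |c i|)^2 * (3*η) := by
      rw [sq, Finset.sum_mul_sum, Finset.sum_mul]
      exact Finset.sum_congr rfl fun i _ => by rw [Finset.sum_mul]
    have hcs : (∑ i, |c i|)^2 ≤ (d:ℝ) * ∑ i, (c i)^2 := by
      have := sq_sum_le_card_mul_sum_sq (s := Finset.univ) (f := fun i => |c i|)
      simp only [Finset.card_univ, Fintype.card_fin, sq_abs] at this
      exact_mod_cast this
    calc |‖L x‖^2 - ‖x‖^2| ≤ (∑ i, |c i|)^2 * (3*η) := by rw [← hsum2]; exact habs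
    _ ≤ ((d:ℝ) * ∑ i, (c i)^2) * (3*η) := by
        exact mul_le_mul_of_nonneg_right hcs (by positivity)
    _ ≤ ((d:ℝ) * (2*‖x‖^2)) * (3*η) :=
        mul_le_mul_of_nonneg_right
          (mul_le_mul_of_nonneg_left hSle (Nat.cast_nonneg d)) (by positivity)
    _ = 6*(d:ℝ)*η*‖x‖^2 := by ring
  -- produce a linear isometry close to L
  have hexU : ∃ U : EuclideanSpace ℝ (Fin d) →ₗᵢ[ℝ] EuclideanSpace ℝ (Fin d),
      ∀ x : EuclideanSpace ℝ (Fin d), ‖x‖ ≤ 1 → ‖L x - U x‖ ≤ 100*((d:ℝ)+1)^2 * η := by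
    by_cases hsmall : η ≤ 1/(12*((d:ℝ)+1))
    · obtain ⟨U, hU⟩ := stmt17_close_isometry L (6*(d:ℝ)*η)
        (by positivity)
        (by
          have h12 : η * (12*((d:ℝ)+1)) ≤ 1 := by
            rw [← le_div_iff₀ (by positivity)]
            exact hsmall
          nlinarith [Nat.cast_nonneg (α := ℝ) d, hη0])
        hquad
      refine ⟨U, fun x hx => ?_⟩
      calc ‖L x - U x‖ ≤ 6*(d:ℝ)*η*‖x‖ := hU x
      _ ≤ 6*(d:ℝ)*η*1 := mul_le_mul_of_nonneg_left hx (by positivity)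
      _ = 6*(d:ℝ)*η := by ring
      _ ≤ 100*((d:ℝ)+1)^2 * η :=
        mul_le_mul_of_nonneg_right
          (by nlinarith [Nat.cast_nonneg (α := ℝ) d] : 6*(d:ℝ) ≤ 100*((d:ℝ)+1)^2) hη0
    · push_neg at hsmall
      refine ⟨(LinearIsometry.id : EuclideanSpace ℝ (Fin d) →ₗᵢ[ℝ] EuclideanSpace ℝ (Fin d)), fun x hx => ?_⟩
      have h1 := hquad x
      have h2 : ‖L x‖^2 ≤ (1+6*(d:ℝ))*‖x‖^2 := by
        rw [abs_le] at h1
        nlinarith [sq_nonneg ‖x‖,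
          mul_nonneg (mul_nonneg (mul_nonneg (by norm_num : (0:ℝ) ≤ 6)
            (Nat.cast_nonneg (α := ℝ) d)) (sub_nonneg.mpr hη1.le)) (sq_nonneg ‖x‖)]
      have h6 : ‖x‖^2 ≤ 1 := by
        nlinarith [mul_nonneg (sub_nonneg.mpr hx) (norm_nonneg x)]
      have h3 : ‖L x‖ ≤ 3*((d:ℝ)+1) := by
        nlinarith [h2, h6, norm_nonneg (L x), Nat.cast_nonneg (α := ℝ) d,
          sq_nonneg ((d:ℝ)),
          mul_le_mul_of_nonneg_left h6 (by positivity : (0:ℝ) ≤ 1+6*(d:ℝ))]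
      have h4 : ‖L x - (LinearIsometry.id : EuclideanSpace ℝ (Fin d) →ₗᵢ[ℝ] EuclideanSpace ℝ (Fin d)) x‖ ≤ ‖L x‖ + ‖x‖ := by
        simpa using norm_sub_le (L x) x
      have h5 : (0:ℝ) < 12*((d:ℝ)+1) := by positivity
      rw [div_lt_iff₀ h5] at hsmall
      nlinarith [Nat.cast_nonneg (α := ℝ) d, h3, h4, hx, hη0,
        mul_lt_mul_of_pos_left hsmall
          (show (0:ℝ) < (25/3)*((d:ℝ)+1) by positivity)]
  obtain ⟨U, hU⟩ := hexU
  -- assemble the affine isometry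
  set R : EuclideanSpace ℝ (Fin d) →ᵃⁱ[ℝ] EuclideanSpace ℝ (Fin d) :=
    ((AffineIsometryEquiv.constVAdd ℝ (EuclideanSpace ℝ (Fin d))
      (lam⁻¹ • T 0)).toAffineIsometry).comp U.toAffineIsometry with hRdef
  have hRx : ∀ x, R x = lam⁻¹ • T 0 + U x := by
    intro x
    simp [hRdef, AffineIsometryEquiv.constVAdd]
    rfl
  refine ⟨R, fun x hx => ?_⟩
  have hxball : ‖x‖ ≤ 1 := by
    have := Metric.mem_ball.mp hx
    rw [dist_zero_right] at this
    linarith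
  have hTx : T x = T.linear x + T 0 := by
    have := T.map_vadd 0 x
    simpa using this
  have hkey : T x - lam • R x = lam • (L x - U x) := by
    rw [hTx, hRx, smul_sub, hLdef]
    simp only [LinearMap.smul_apply, smul_smul, mul_inv_cancel₀ hlam.ne', one_smul, smul_add]
    abel
  rw [hkey, norm_smul, Real.norm_eq_abs, abs_of_pos hlam]
  calc lam * ‖L x - U x‖ ≤ lam * (100*((d:ℝ)+1)^2 * η) :=
    mul_le_mul_of_nonneg_left (hU x hxball) hlam.le
  _ = 100*((d:ℝ)+1)^2 * lam * η := by ring
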